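/- arXiv:2208.14373 — 2 statements merged into one kernel-verified Lean document; each statement's English description precedes it below -/
import Mathlib

section
/- Low-order entries of the transformation matrix: For all α', α > 0 and u', u ∈ ℝ, one has ℙ_{1,0} = −√2·(α'/α²)·(u − u'), ℙ_{2,0} = (√2/2)·(α'/α)·(2(u − u')²/α² + (α')²/α² − 1), and ℙ_{2,1} = −2·((α')²/α³)·(u − u'). -/
open MeasureTheory Real Finset

/-- Physicists' Hermite polynomials: `H 0 x = 1`, `H 1 x = 2x`,
`H (n+1) x = 2x · H n x − 2n · H (n−1) x`. -/
noncomputable def physHermite : ℕ → ℝ → ℝ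
  | 0 => fun _ => 1
  | 1 => fun x => 2 * x
  | (n + 2) => fun x => 2 * x * physHermite (n + 1) x - 2 * ((n : ℝ) + 1) * physHermite n x

/-- Asymmetrically weighted Hermite function
`ψ_n^{α,u}(v) = (π·2^n·n!)^{-1/2} · H_n((v−u)/α) · exp(−((v−u)/α)²)`. -/
noncomputable def awHermite (α u : ℝ) (n : ℕ) (v : ℝ) : ℝ :=
  (Real.sqrt (Real.pi * 2 ^ n * (n.factorial : ℝ)))⁻¹ * physHermite n ((v - u) / α) *
    Real.exp (-((v - u) / α) ^ 2)

/-- The weight `ω(v) = √π · α⁻¹ · exp(((v−u)/α)²)`. -/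
noncomputable def hermiteWeight (α u : ℝ) (v : ℝ) : ℝ :=
  Real.sqrt Real.pi * α⁻¹ * Real.exp (((v - u) / α) ^ 2)

/-- Transformation matrix entries `ℙ_{n,m} = ∫ ψ_m^{α',u'}(v) · ψ_n^{α,u}(v) · ω(v) dv`. -/
noncomputable def transferMatrix (α' u' α u : ℝ) (n m : ℕ) : ℝ :=
  ∫ v : ℝ, awHermite α' u' m v * awHermite α u n v * hermiteWeight α u v

lemma ph0 : ∀ x:ℝ, physHermite 0 x = 1 := fun _ => rfl
lemma ph1 : ∀ x:ℝ, physHermite 1 x = 2*x := fun _ => rfl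
lemma ph2 : ∀ x:ℝ, physHermite 2 x = 4*x^2 - 2 := fun x => by
  show 2 * x * physHermite 1 x - 2 * ((0:ℕ) + 1 : ℝ) * physHermite 0 x = 4*x^2 - 2
  rw [ph1, ph0]; push_cast; ring


lemma gauss0 : ∫ x:ℝ, Real.exp (-x^2) = √π := by
  simpa using integral_gaussian 1

lemma int_exp : Integrable fun x:ℝ => Real.exp (-x^2) := by
  simpa using integrable_exp_neg_mul_sq one_pos

lemma int_x : Integrable fun x:ℝ => x * Real.exp (-x^2) := by
  simpa using integrable_mul_exp_neg_mul_sq one_pos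

lemma int_x2 : Integrable fun x:ℝ => x^2 * Real.exp (-x^2) := by
  have hg : Integrable fun x:ℝ => 2 * Real.exp (-(1/2:ℝ) * x^2) :=
    (integrable_exp_neg_mul_sq (by norm_num)).const_mul 2
  refine hg.mono' ?_ ?_
  · exact (Measurable.aestronglyMeasurable (by fun_prop))
  · filter_upwards with x
    have h1 : x^2 ≤ 2 * Real.exp (x^2/2) := by nlinarith [Real.add_one_le_exp (x^2/2)]
    have : x^2 * Real.exp (-x^2) ≤ 2 * Real.exp (x^2/2) * Real.exp (-x^2) :=
      mul_le_mul_of_nonneg_right h1 (Real.exp_nonneg _)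
    rw [Real.norm_eq_abs, abs_of_nonneg (by positivity)]
    calc x^2 * Real.exp (-x^2) ≤ 2 * Real.exp (x^2/2) * Real.exp (-x^2) := this
      _ = 2 * Real.exp (-(1/2:ℝ) * x^2) := by rw [mul_assoc, ← Real.exp_add]; ring_nf

lemma int_x3 : Integrable fun x:ℝ => x^3 * Real.exp (-x^2) := by
  have hg : Integrable fun x:ℝ => 18 * Real.exp (-(1/2:ℝ) * x^2) :=
    (integrable_exp_neg_mul_sq (by norm_num)).const_mul 18
  refine hg.mono' ?_ ?_
  · exact (Measurable.aestronglyMeasurable (by fun_prop))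
  · filter_upwards with x
    have key : |x|^3 ≤ 18 * Real.exp (x^2/2) := by
      have h1 : x^2/4 + 1 ≤ Real.exp (x^2/4) := Real.add_one_le_exp (x^2/4)
      have h2 : Real.exp (x^2/2) = Real.exp (x^2/4) * Real.exp (x^2/4) := by
        rw [← Real.exp_add]; ring_nf
      have h3 : |x|^2 = x^2 := sq_abs x
      nlinarith [abs_nonneg x, sq_nonneg (|x|^2 - |x|), sq_nonneg (|x| - 1), sq_nonneg x]
    have : |x|^3 * Real.exp (-x^2) ≤ 18 * Real.exp (x^2/2) * Real.exp (-x^2) :=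
      mul_le_mul_of_nonneg_right key (Real.exp_nonneg _)
    rw [Real.norm_eq_abs, abs_mul, abs_of_nonneg (Real.exp_nonneg _), abs_pow]
    calc |x|^3 * Real.exp (-x^2) ≤ 18 * Real.exp (x^2/2) * Real.exp (-x^2) := this
      _ = 18 * Real.exp (-(1/2:ℝ) * x^2) := by rw [mul_assoc, ← Real.exp_add]; ring_nf

lemma gauss1 : ∫ x:ℝ, x * Real.exp (-x^2) = 0 := by
  have h := integral_neg_eq_self (fun x : ℝ => x * Real.exp (-x^2)) (volume : Measure ℝ)
  simp only [neg_sq, neg_mul] at h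
  rw [integral_neg] at h
  linarith

lemma gauss3 : ∫ x:ℝ, x^3 * Real.exp (-x^2) = 0 := by
  have h := integral_neg_eq_self (fun x : ℝ => x^3 * Real.exp (-x^2)) (volume : Measure ℝ)
  have h2 : ∀ x:ℝ, (-x)^3 * Real.exp (-(-x)^2) = -(x^3 * Real.exp (-x^2)) := fun x => by
    ring_nf
  simp only [h2] at h
  rw [integral_neg] at h
  linarith

lemma gauss2 : ∫ x:ℝ, x^2 * Real.exp (-x^2) = √π/2 := by
  have hd : ∀ x:ℝ, HasDerivAt (fun x:ℝ => x * Real.exp (-x^2))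
      ((1 - 2*x^2) * Real.exp (-x^2)) x := by
    intro x
    have h1 : HasDerivAt (fun x:ℝ => -x^2) (-(2*x)) x := by
      simpa using (hasDerivAt_pow 2 x).fun_neg
    have h3 := (hasDerivAt_id x).fun_mul h1.exp
    simp only [id_eq] at h3
    refine h3.congr_deriv ?_
    ring
  have heq : (fun x:ℝ => (1 - 2*x^2) * Real.exp (-x^2))
      = fun x:ℝ => Real.exp (-x^2) - 2 * (x^2 * Real.exp (-x^2)) := by
    funext x; ring
  have hint' : Integrable fun x:ℝ => (1 - 2*x^2) * Real.exp (-x^2) := by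
    rw [heq]; exact int_exp.sub (int_x2.const_mul 2)
  have h0 := integral_eq_zero_of_hasDerivAt_of_integrable hd hint' int_x
  rw [heq, integral_sub int_exp (int_x2.const_mul 2), integral_const_mul, gauss0] at h0
  linarith

lemma integral_cubic_gauss (a b c d : ℝ) :
    ∫ x:ℝ, (a + b*x + c*x^2 + d*x^3) * Real.exp (-x^2) = a*√π + c*(√π/2) := by
  have heq : (fun x:ℝ => (a + b*x + c*x^2 + d*x^3) * Real.exp (-x^2))
      = fun x:ℝ => a * Real.exp (-x^2) + b * (x * Real.exp (-x^2))
        + c * (x^2 * Real.exp (-x^2)) + d * (x^3 * Real.exp (-x^2)) := by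
    funext x; ring
  rw [heq]
  have i1 : Integrable (fun x:ℝ => a * Real.exp (-x^2) + b * (x * Real.exp (-x^2))) volume :=
    (int_exp.const_mul a).add (int_x.const_mul b)
  have i2 : Integrable (fun x:ℝ => a * Real.exp (-x^2) + b * (x * Real.exp (-x^2))
      + c * (x^2 * Real.exp (-x^2))) volume := i1.add (int_x2.const_mul c)
  rw [integral_add i2 (int_x3.const_mul d),
    integral_add i1 (int_x2.const_mul c),
    integral_add (int_exp.const_mul a) (int_x.const_mul b),
    integral_const_mul, integral_const_mul, integral_const_mul, integral_const_mul,
    gauss0, gauss1, gauss2, gauss3]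
  ring

lemma transferMatrix_eq (α' u' α u : ℝ) (hα' : 0 < α') (n m : ℕ) :
    transferMatrix α' u' α u n m
      = α' * ((Real.sqrt (π * 2^m * (m.factorial:ℝ)))⁻¹
          * (Real.sqrt (π * 2^n * (n.factorial:ℝ)))⁻¹ * (Real.sqrt π * α⁻¹))
        * ∫ t:ℝ, physHermite m t * physHermite n ((α' * t + (u' - u))/α) * Real.exp (-t^2) := by
  set C : ℝ := (Real.sqrt (π * 2^m * (m.factorial:ℝ)))⁻¹
      * (Real.sqrt (π * 2^n * (n.factorial:ℝ)))⁻¹ * (Real.sqrt π * α⁻¹) with hC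
  set G : ℝ → ℝ := fun t => physHermite m t * physHermite n ((α' * t + (u' - u))/α)
      * Real.exp (-t^2) with hG
  have key : ∀ v:ℝ, awHermite α' u' m v * awHermite α u n v * hermiteWeight α u v
      = C * G ((v - u') / α') := by
    intro v
    have hc : α' * ((v - u') / α') = v - u' := mul_div_cancel₀ _ hα'.ne'
    have he : Real.exp (-((v - u)/α)^2) * Real.exp (((v - u)/α)^2) = 1 := by
      rw [← Real.exp_add]; simp
    simp only [hG, awHermite, hermiteWeight, hC, hc, show v - u' + (u' - u) = v - u by ring]
    calc (Real.sqrt (π * 2^m * (m.factorial:ℝ)))⁻¹ * physHermite m ((v - u')/α')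
          * Real.exp (-((v - u')/α')^2)
        * ((Real.sqrt (π * 2^n * (n.factorial:ℝ)))⁻¹ * physHermite n ((v - u)/α)
          * Real.exp (-((v - u)/α)^2))
        * (Real.sqrt π * α⁻¹ * Real.exp (((v - u)/α)^2))
        = (Real.sqrt (π * 2^m * (m.factorial:ℝ)))⁻¹ * (Real.sqrt (π * 2^n * (n.factorial:ℝ)))⁻¹
            * (Real.sqrt π * α⁻¹)
          * (physHermite m ((v - u')/α') * physHermite n ((v - u)/α)
            * Real.exp (-((v - u')/α')^2))
          * (Real.exp (-((v - u)/α)^2) * Real.exp (((v - u)/α)^2)) := by ring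
      _ = _ := by rw [he, mul_one]
  have h1 : transferMatrix α' u' α u n m = ∫ v : ℝ, C * G ((v - u') / α') := by
    rw [transferMatrix]
    exact integral_congr_ae (Filter.Eventually.of_forall key)
  have h3 : ∫ v:ℝ, G ((v - u')/α') = ∫ v:ℝ, G (v/α') :=
    integral_sub_right_eq_self (fun v => G (v/α')) u'
  have h4 : ∫ v:ℝ, G (v/α') = |α'| • ∫ t, G t := Measure.integral_comp_div G α'
  rw [h1, integral_const_mul, h3, h4, abs_of_pos hα', smul_eq_mul]
  ring

/-- Low-order entries of the transformation matrix. -/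
theorem transferMatrix_low_order_entries (α' α u' u : ℝ) (hα' : 0 < α') (hα : 0 < α) :
    transferMatrix α' u' α u 1 0 = -Real.sqrt 2 * (α' / α ^ 2) * (u - u') ∧
    transferMatrix α' u' α u 2 0
      = Real.sqrt 2 / 2 * (α' / α) *
          (2 * (u - u') ^ 2 / α ^ 2 + α' ^ 2 / α ^ 2 - 1) ∧
    transferMatrix α' u' α u 2 1 = -2 * (α' ^ 2 / α ^ 3) * (u - u') := by
  refine ⟨?_, ?_, ?_⟩
  · rw [transferMatrix_eq α' u' α u hα' 1 0]
    have h : ∫ t:ℝ, physHermite 0 t * physHermite 1 ((α' * t + (u' - u))/α) * Real.exp (-t^2)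
        = ∫ t:ℝ, ((2*(u'-u)/α) + (2*α'/α)*t + 0*t^2 + 0*t^3) * Real.exp (-t^2) := by
      congr 1; funext t
      rw [ph0, ph1]
      field_simp
      ring
    rw [h, integral_cubic_gauss]
    have hπ : (0:ℝ) < Real.sqrt π := Real.sqrt_pos.2 Real.pi_pos
    have h2 : Real.sqrt 2 * Real.sqrt 2 = 2 := Real.mul_self_sqrt (by norm_num)
    have h2p : (0:ℝ) < Real.sqrt 2 := Real.sqrt_pos.2 (by norm_num)
    have e1 : Real.sqrt (π * 2^(0:ℕ) * ((0:ℕ).factorial:ℝ)) = Real.sqrt π := by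
      norm_num [Nat.factorial]
    have e2 : Real.sqrt (π * 2^(1:ℕ) * ((1:ℕ).factorial:ℝ)) = Real.sqrt π * Real.sqrt 2 := by
      rw [show π * 2^(1:ℕ) * ((1:ℕ).factorial:ℝ) = π * 2 by norm_num [Nat.factorial],
        Real.sqrt_mul Real.pi_nonneg 2]
    rw [e1, e2]
    field_simp
    linear_combination (-2*(u'-u)) * h2
  · rw [transferMatrix_eq α' u' α u hα' 2 0]
    have h : ∫ t:ℝ, physHermite 0 t * physHermite 2 ((α' * t + (u' - u))/α) * Real.exp (-t^2)
        = ∫ t:ℝ, ((4*(u'-u)^2/α^2 - 2) + (8*α'*(u'-u)/α^2)*t + (4*α'^2/α^2)*t^2 + 0*t^3)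
            * Real.exp (-t^2) := by
      congr 1; funext t
      rw [ph0, ph2]
      field_simp
      ring
    rw [h, integral_cubic_gauss]
    have hπ : (0:ℝ) < Real.sqrt π := Real.sqrt_pos.2 Real.pi_pos
    have h2 : Real.sqrt 2 * Real.sqrt 2 = 2 := Real.mul_self_sqrt (by norm_num)
    have h2p : (0:ℝ) < Real.sqrt 2 := Real.sqrt_pos.2 (by norm_num)
    have e1 : Real.sqrt (π * 2^(0:ℕ) * ((0:ℕ).factorial:ℝ)) = Real.sqrt π := by
      norm_num [Nat.factorial]
    have e8 : Real.sqrt (8:ℝ) = 2 * Real.sqrt 2 := by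
      rw [show (8:ℝ) = 2^2*2 by norm_num, Real.sqrt_mul (by positivity), Real.sqrt_sq (by norm_num)]
    have e2 : Real.sqrt (π * 2^(2:ℕ) * ((2:ℕ).factorial:ℝ)) = Real.sqrt π * (2 * Real.sqrt 2) := by
      rw [show π * 2^(2:ℕ) * ((2:ℕ).factorial:ℝ) = π * 8 by norm_num [Nat.factorial, mul_assoc],
        Real.sqrt_mul Real.pi_nonneg 8, e8]
    rw [e1, e2]
    field_simp
    linear_combination (-4*(u'-u)^2 + 2*α^2 - 2*α'^2) * h2
  · rw [transferMatrix_eq α' u' α u hα' 2 1]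
    have h : ∫ t:ℝ, physHermite 1 t * physHermite 2 ((α' * t + (u' - u))/α) * Real.exp (-t^2)
        = ∫ t:ℝ, (0 + (8*(u'-u)^2/α^2 - 4)*t + (16*α'*(u'-u)/α^2)*t^2 + (8*α'^2/α^2)*t^3)
            * Real.exp (-t^2) := by
      congr 1; funext t
      rw [ph1, ph2]
      field_simp
      ring
    rw [h, integral_cubic_gauss]
    have hπ : (0:ℝ) < Real.sqrt π := Real.sqrt_pos.2 Real.pi_pos
    have h2 : Real.sqrt 2 * Real.sqrt 2 = 2 := Real.mul_self_sqrt (by norm_num)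
    have h2p : (0:ℝ) < Real.sqrt 2 := Real.sqrt_pos.2 (by norm_num)
    have e1 : Real.sqrt (π * 2^(1:ℕ) * ((1:ℕ).factorial:ℝ)) = Real.sqrt π * Real.sqrt 2 := by
      rw [show π * 2^(1:ℕ) * ((1:ℕ).factorial:ℝ) = π * 2 by norm_num [Nat.factorial],
        Real.sqrt_mul Real.pi_nonneg 2]
    have e8 : Real.sqrt (8:ℝ) = 2 * Real.sqrt 2 := by
      rw [show (8:ℝ) = 2^2*2 by norm_num, Real.sqrt_mul (by positivity), Real.sqrt_sq (by norm_num)]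
    have e2 : Real.sqrt (π * 2^(2:ℕ) * ((2:ℕ).factorial:ℝ)) = Real.sqrt π * (2 * Real.sqrt 2) := by
      rw [show π * 2^(2:ℕ) * ((2:ℕ).factorial:ℝ) = π * 8 by norm_num [Nat.factorial, mul_assoc],
        Real.sqrt_mul Real.pi_nonneg 8, e8]
    rw [e1, e2]
    field_simp
    linear_combination (-8 * α' * (u'-u)) * h2
end

section
/- Physics-based update formula for the Hermite shift parameter: Let N ∈ ℕ with N ≥ 1, α > 0, u ∈ ℝ, and let c_0, …, c_N be real numbers with c_0 ≠ 0. Define f(v) := Σ_{m=0}^N c_m·ψ_m^{α,u}(v). Then ∫_ℝ f(v) dv = α·c_0 ≠ 0 and (∫_ℝ v·f(v) dv)/(∫_ℝ f(v) dv) = u + (α/√2)·(c_1/c_0). -/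
open MeasureTheory Real Finset

noncomputable def PHpoly : ℕ → Polynomial ℝ
  | 0 => 1
  | 1 => Polynomial.C 2 * Polynomial.X
  | (n + 2) => Polynomial.C 2 * Polynomial.X * PHpoly (n + 1)
      - Polynomial.C (2 * ((n : ℝ) + 1)) * PHpoly n

theorem physHermite_eval : ∀ (n : ℕ) (x : ℝ), physHermite n x = (PHpoly n).eval x
  | 0, x => by simp [physHermite, PHpoly]
  | 1, x => by simp [physHermite, PHpoly]
  | (n + 2), x => by
      simp [physHermite, PHpoly, physHermite_eval (n + 1), physHermite_eval n]

theorem pow_two_n_le (n : ℕ) (x : ℝ) :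
    x ^ (2 * n) ≤ (2 * n : ℝ) ^ n * Real.exp (x ^ 2 / 2) := by
  rcases Nat.eq_zero_or_pos n with h | h
  · subst h
    simpa using Real.one_le_exp (by positivity)
  · have h1 : x ^ 2 / (2 * n) ≤ Real.exp (x ^ 2 / (2 * n)) :=
      le_trans (by linarith [Real.add_one_le_exp (x ^ 2 / (2 * n))]) le_rfl
    have h2n : (0 : ℝ) < 2 * n := by positivity
    have h2 : x ^ 2 ≤ 2 * n * Real.exp (x ^ 2 / (2 * n)) := by
      rw [div_le_iff₀ h2n] at h1; linarith [h1]
    calc x ^ (2 * n) = (x ^ 2) ^ n := by rw [← pow_mul]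
      _ ≤ (2 * n * Real.exp (x ^ 2 / (2 * n))) ^ n := by
          exact pow_le_pow_left₀ (sq_nonneg x) h2 n
      _ = (2 * n : ℝ) ^ n * Real.exp (x ^ 2 / (2 * n)) ^ n := by rw [mul_pow]
      _ = (2 * n : ℝ) ^ n * Real.exp (x ^ 2 / 2) := by
          rw [← Real.exp_nat_mul]
          congr 1
          field_simp

theorem integrable_pow_gauss (n : ℕ) :
    Integrable (fun x : ℝ => x ^ n * Real.exp (-x ^ 2)) := by
  have hint : Integrable (fun x : ℝ =>
      Real.exp (-1 * x ^ 2) + (2 * n : ℝ) ^ n * Real.exp (-(1/2) * x ^ 2)) :=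
    (integrable_exp_neg_mul_sq one_pos).add
      ((integrable_exp_neg_mul_sq (by norm_num : (0:ℝ) < 1/2)).const_mul _)
  refine hint.mono' ?_ ?_
  · exact ((continuous_pow n).mul (Continuous.rexp (by continuity))).aestronglyMeasurable
  · filter_upwards with x
    rw [Real.norm_eq_abs, abs_mul, abs_of_nonneg (Real.exp_pos _).le, abs_pow]
    have h1 : |x| ^ n ≤ 1 + x ^ (2 * n) := by
      rcases le_or_gt (|x|) 1 with h | h
      · have := pow_le_one₀ (n := n) (abs_nonneg x) h
        nlinarith [pow_nonneg (sq_nonneg x) n, pow_mul x 2 n, sq_abs x,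
          pow_nonneg (abs_nonneg x) n]
      · have h2 : |x| ^ n ≤ |x| ^ (2 * n) := by
          apply pow_le_pow_right₀ h.le; omega
        have : |x| ^ (2 * n) = x ^ (2 * n) := by
          rw [← abs_pow, abs_of_nonneg]
          rw [pow_mul]; positivity
        nlinarith
    have h2 := pow_two_n_le n x
    have hepos := (Real.exp_pos (-x ^ 2)).le
    have key : |x| ^ n * Real.exp (-x ^ 2) ≤
        (1 + x ^ (2 * n)) * Real.exp (-x ^ 2) := by
      apply mul_le_mul_of_nonneg_right h1 hepos
    refine key.trans ?_
    have hsplit : (1 + x ^ (2 * n)) * Real.exp (-x ^ 2)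
        = Real.exp (-1 * x ^ 2) + x ^ (2 * n) * Real.exp (-x ^ 2) := by
      ring_nf
    rw [hsplit]
    refine add_le_add le_rfl ?_
    calc x ^ (2 * n) * Real.exp (-x ^ 2)
        ≤ ((2 * n : ℝ) ^ n * Real.exp (x ^ 2 / 2)) * Real.exp (-x ^ 2) :=
          mul_le_mul_of_nonneg_right h2 hepos
      _ = (2 * n : ℝ) ^ n * Real.exp (-(1/2) * x ^ 2) := by
          rw [mul_assoc, ← Real.exp_add]; ring_nf

theorem integrable_poly_gauss (p : Polynomial ℝ) :
    Integrable (fun x : ℝ => p.eval x * Real.exp (-x ^ 2)) := by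
  have : (fun x : ℝ => p.eval x * Real.exp (-x ^ 2)) =
      fun x : ℝ => ∑ i ∈ Finset.range (p.natDegree + 1),
        p.coeff i * (x ^ i * Real.exp (-x ^ 2)) := by
    funext x
    rw [Polynomial.eval_eq_sum_range, Finset.sum_mul]
    congr 1; funext i; ring
  rw [this]
  exact integrable_finset_sum _ fun i _ => (integrable_pow_gauss i).const_mul _

theorem integrable_hermite_gauss (n : ℕ) :
    Integrable (fun x : ℝ => physHermite n x * Real.exp (-x ^ 2)) := by
  simpa only [physHermite_eval] using integrable_poly_gauss (PHpoly n)

theorem integrable_mul_hermite_gauss (n : ℕ) :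
    Integrable (fun x : ℝ => x * (physHermite n x * Real.exp (-x ^ 2))) := by
  have := integrable_poly_gauss (Polynomial.X * PHpoly n)
  simp only [Polynomial.eval_mul, Polynomial.eval_X] at this
  simpa only [physHermite_eval, mul_assoc] using this


theorem physHermite_succ_succ (n : ℕ) (x : ℝ) :
    physHermite (n + 2) x = 2 * x * physHermite (n + 1) x
      - 2 * ((n : ℝ) + 1) * physHermite n x := rfl

theorem hasDerivAt_two_mul (x : ℝ) : HasDerivAt (fun y : ℝ => 2 * y) 2 x := by
  simpa using (hasDerivAt_id x).const_mul (2 : ℝ)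

theorem hasDerivAt_physHermite_succ :
    ∀ (n : ℕ) (x : ℝ),
      HasDerivAt (physHermite (n + 1)) (2 * ((n : ℝ) + 1) * physHermite n x) x
  | 0, x => by
      have h : physHermite 1 = fun y : ℝ => 2 * y := rfl
      rw [h]
      have : (2 : ℝ) = 2 * ((0 : ℕ) + 1 : ℝ) * physHermite 0 x := by
        simp [physHermite]
      exact this ▸ hasDerivAt_two_mul x
  | 1, x => by
      have h : physHermite 2 = fun y : ℝ =>
          2 * y * physHermite 1 y - 2 * ((0 : ℕ) + 1 : ℝ) * physHermite 0 y := rfl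
      rw [h]
      have h1 : physHermite 1 = fun y : ℝ => 2 * y := rfl
      have h0 : physHermite 0 = fun _ : ℝ => (1 : ℝ) := rfl
      simp only [h1, h0]
      have : HasDerivAt (fun y : ℝ => 2 * y * (2 * y) - 2 * ((0:ℕ) + 1 : ℝ) * 1)
          (2 * (2 * x) + 2 * x * 2 - 0) x :=
        (((hasDerivAt_two_mul x).mul (hasDerivAt_two_mul x))).sub (hasDerivAt_const x _)
      convert this using 1
      simp [h1]
      ring
  | (n + 2), x => by
      have A := hasDerivAt_physHermite_succ (n + 1) x
      have B := hasDerivAt_physHermite_succ n x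
      have h : physHermite (n + 3) = fun y : ℝ =>
          2 * y * physHermite (n + 2) y - 2 * ((n : ℝ) + 1 + 1) * physHermite (n + 1) y := by
        funext y
        have := physHermite_succ_succ (n + 1) y
        rw [this]
        norm_num
      rw [h]
      have hprod : HasDerivAt (fun y : ℝ => 2 * y * physHermite (n + 2) y)
          (2 * physHermite (n + 2) x +
            2 * x * (2 * ((n : ℝ) + 1 + 1) * physHermite (n + 1) x)) x :=
        (hasDerivAt_two_mul x).mul (by exact_mod_cast A)
      have hfull := hprod.sub (B.const_mul (2 * ((n : ℝ) + 1 + 1)))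
      refine hfull.congr_deriv ?_
      rw [physHermite_succ_succ n x]
      push_cast
      ring

theorem hasDerivAt_hermite_gauss (n : ℕ) (x : ℝ) :
    HasDerivAt (fun y : ℝ => physHermite n y * Real.exp (-y ^ 2))
      (-(physHermite (n + 1) x * Real.exp (-x ^ 2))) x := by
  have hexp : HasDerivAt (fun y : ℝ => Real.exp (-y ^ 2))
      (-(2 * x) * Real.exp (-x ^ 2)) x := by
    have h1 : HasDerivAt (fun y : ℝ => -y ^ 2) (-(2 * x)) x := by
      have h := (hasDerivAt_pow 2 x).neg; simp at h; exact h
    simpa [mul_comm] using h1.exp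
  match n with
  | 0 =>
      have h0 : physHermite 0 = fun _ : ℝ => (1 : ℝ) := rfl
      rw [h0]
      have h1 : physHermite 1 x = 2 * x := rfl
      simp only [one_mul, h1]
      simpa [neg_mul] using hexp
  | (m + 1) =>
      have hH := hasDerivAt_physHermite_succ m x
      have := hH.mul hexp
      refine this.congr_deriv ?_
      rw [physHermite_succ_succ m x]
      ring

theorem integrable_gauss' : Integrable (fun x : ℝ => Real.exp (-x ^ 2)) := by
  simpa [neg_mul, one_mul] using integrable_exp_neg_mul_sq (one_pos)

theorem gaussI : ∀ n : ℕ, (∫ x : ℝ, physHermite n x * Real.exp (-x ^ 2))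
    = if n = 0 then Real.sqrt Real.pi else 0 := by
  intro n
  match n with
  | 0 =>
      simp only [if_pos rfl]
      have h0 : physHermite 0 = fun _ : ℝ => (1 : ℝ) := rfl
      rw [h0]
      simp only [one_mul]
      have := integral_gaussian 1
      simpa [neg_mul, one_mul] using this
  | (m + 1) =>
      simp only [Nat.succ_ne_zero, if_false]
      have hzero := integral_eq_zero_of_hasDerivAt_of_integrable
        (hasDerivAt_hermite_gauss m) ((integrable_hermite_gauss (m + 1)).neg)
        (integrable_hermite_gauss m)
      rwa [integral_neg, neg_eq_zero] at hzero

theorem gaussJ : ∀ n : ℕ, (∫ x : ℝ, x * (physHermite n x * Real.exp (-x ^ 2)))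
    = if n = 1 then Real.sqrt Real.pi else 0 := by
  intro n
  match n with
  | 0 =>
      simp only [Nat.zero_ne_one, if_false]
      have h0 : physHermite 0 = fun _ : ℝ => (1 : ℝ) := rfl
      simp only [h0, one_mul]
      have hderiv : ∀ x : ℝ, HasDerivAt (fun y : ℝ => -(1/2) * Real.exp (-y ^ 2))
          (x * Real.exp (-x ^ 2)) x := by
        intro x
        have h1 : HasDerivAt (fun y : ℝ => -y ^ 2) (-(2 * x)) x := by
          have h := (hasDerivAt_pow 2 x).neg; simp at h; exact h
        have h2 := (h1.exp).const_mul (-(1/2) : ℝ)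
        refine h2.congr_deriv ?_
        ring
      have hint : Integrable (fun x : ℝ => x * Real.exp (-x ^ 2)) := by
        simpa only [h0, one_mul] using integrable_mul_hermite_gauss 0
      have hf : Integrable (fun y : ℝ => -(1/2) * Real.exp (-y ^ 2)) :=
        integrable_gauss'.const_mul _
      exact integral_eq_zero_of_hasDerivAt_of_integrable hderiv hint hf
  | (m + 1) =>
      have key : (∫ x : ℝ, x * (physHermite (m + 1) x * Real.exp (-x ^ 2)))
          = ∫ x : ℝ, physHermite m x * Real.exp (-x ^ 2) := by
        have hderiv : ∀ x : ℝ,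
            HasDerivAt (fun y : ℝ => y * (physHermite m y * Real.exp (-y ^ 2)))
              (physHermite m x * Real.exp (-x ^ 2)
                + x * (-(physHermite (m + 1) x * Real.exp (-x ^ 2)))) x := by
          intro x
          have := (hasDerivAt_id x).mul (hasDerivAt_hermite_gauss m x)
          refine this.congr_deriv ?_; simp
        have hint' : Integrable (fun x : ℝ =>
            physHermite m x * Real.exp (-x ^ 2)
              + x * (-(physHermite (m + 1) x * Real.exp (-x ^ 2)))) := by
          simpa only [mul_neg, Pi.add_def, Pi.neg_def] using
            (integrable_hermite_gauss m).add (integrable_mul_hermite_gauss (m + 1)).neg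
        have hzero := integral_eq_zero_of_hasDerivAt_of_integrable hderiv hint'
          (integrable_mul_hermite_gauss m)
        rw [integral_add (integrable_hermite_gauss m)
          (by simpa only [mul_neg, Pi.neg_def] using (integrable_mul_hermite_gauss (m + 1)).neg)] at hzero
        have : (∫ x : ℝ, x * -(physHermite (m + 1) x * Real.exp (-x ^ 2)))
            = -∫ x : ℝ, x * (physHermite (m + 1) x * Real.exp (-x ^ 2)) := by
          rw [← integral_neg]
          congr 1; funext x; ring
        rw [this] at hzero
        linarith
      rw [key, gaussI m]
      by_cases hm : m = 0
      · subst hm; simp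
      · simp [hm]

section CoV

variable {α u : ℝ}

theorem integral_comp_affine (hα : 0 < α) (g : ℝ → ℝ) :
    (∫ v : ℝ, g ((v - u) / α)) = α * ∫ x : ℝ, g x := by
  have h1 : (∫ v : ℝ, g ((v - u) / α)) = ∫ v : ℝ, (fun w => g (w / α)) (v - u) := rfl
  rw [h1, integral_sub_right_eq_self (fun w => g (w / α)) u,
    MeasureTheory.Measure.integral_comp_div g α, abs_of_pos hα, smul_eq_mul]

theorem integrable_comp_affine (hα : 0 < α) {g : ℝ → ℝ} (hg : Integrable g) :
    Integrable (fun v : ℝ => g ((v - u) / α)) := by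
  have h2 : Integrable (fun w : ℝ => g (w / α)) :=
    (MeasureTheory.integrable_comp_div_iff g (ne_of_gt hα)).mpr hg
  exact h2.comp_sub_right u

theorem integrable_awHermite (hα : 0 < α) (m : ℕ) : Integrable (awHermite α u m) := by
  have hg : Integrable (fun x : ℝ =>
      (Real.sqrt (Real.pi * 2 ^ m * (m.factorial : ℝ)))⁻¹ *
        (physHermite m x * Real.exp (-x ^ 2))) :=
    (integrable_hermite_gauss m).const_mul _
  have := integrable_comp_affine (u := u) hα hg
  refine this.congr ?_
  filter_upwards with v
  simp only [awHermite]; ring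

theorem integrable_mul_awHermite (hα : 0 < α) (m : ℕ) :
    Integrable (fun v : ℝ => v * awHermite α u m v) := by
  have hg : Integrable (fun x : ℝ =>
      (α * x + u) * ((Real.sqrt (Real.pi * 2 ^ m * (m.factorial : ℝ)))⁻¹ *
        (physHermite m x * Real.exp (-x ^ 2)))) := by
    have h1 : Integrable (fun x : ℝ =>
        α * ((Real.sqrt (Real.pi * 2 ^ m * (m.factorial : ℝ)))⁻¹ *
          (x * (physHermite m x * Real.exp (-x ^ 2))))) :=
      ((integrable_mul_hermite_gauss m).const_mul _).const_mul _
    have h2 : Integrable (fun x : ℝ =>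
        u * ((Real.sqrt (Real.pi * 2 ^ m * (m.factorial : ℝ)))⁻¹ *
          (physHermite m x * Real.exp (-x ^ 2)))) :=
      ((integrable_hermite_gauss m).const_mul _).const_mul _
    refine (h1.add h2).congr ?_
    filter_upwards with x
    simp only [Pi.add_apply]
    ring
  have := integrable_comp_affine (u := u) hα hg
  refine this.congr ?_
  filter_upwards with v
  have hαne : α ≠ 0 := ne_of_gt hα
  have : α * ((v - u) / α) + u = v := by field_simp; ring
  simp only [awHermite, this]
  ring

theorem psi_int (hα : 0 < α) (m : ℕ) :
    (∫ v : ℝ, awHermite α u m v) = if m = 0 then α else 0 := by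
  have hrw : (∫ v : ℝ, awHermite α u m v)
      = ∫ v : ℝ, (fun x => (Real.sqrt (Real.pi * 2 ^ m * (m.factorial : ℝ)))⁻¹ *
          (physHermite m x * Real.exp (-x ^ 2))) ((v - u) / α) := by
    congr 1; funext v; simp only [awHermite]; ring
  rw [hrw, integral_comp_affine hα (fun x => (Real.sqrt (Real.pi * 2 ^ m * (m.factorial : ℝ)))⁻¹ * (physHermite m x * Real.exp (-x ^ 2))), integral_const_mul _ _, gaussI]
  match m with
  | 0 =>
      simp only [if_pos rfl, if_true]
      have hπ : Real.sqrt Real.pi ≠ 0 := by positivity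
      field_simp
      simp
  | (k + 1) => simp

theorem vpsi_int (hα : 0 < α) (m : ℕ) :
    (∫ v : ℝ, v * awHermite α u m v)
      = if m = 0 then α * u else if m = 1 then α ^ 2 * (Real.sqrt 2)⁻¹ else 0 := by
  set K := (Real.sqrt (Real.pi * 2 ^ m * (m.factorial : ℝ)))⁻¹ with hK
  have hrw : (∫ v : ℝ, v * awHermite α u m v)
      = ∫ v : ℝ, (fun x => (α * x + u) * (K * (physHermite m x * Real.exp (-x ^ 2))))
          ((v - u) / α) := by
    congr 1; funext v
    have hαne : α ≠ 0 := ne_of_gt hα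
    have hv : α * ((v - u) / α) + u = v := by field_simp; ring
    simp only [hv, awHermite]
    ring
  rw [hrw, integral_comp_affine hα (fun x => (α * x + u) * (K * (physHermite m x * Real.exp (-x ^ 2))))]
  have hsplit : (∫ x : ℝ, (α * x + u) * (K * (physHermite m x * Real.exp (-x ^ 2))))
      = α * K * (∫ x : ℝ, x * (physHermite m x * Real.exp (-x ^ 2)))
        + u * K * (∫ x : ℝ, physHermite m x * Real.exp (-x ^ 2)) := by
    rw [← integral_const_mul (α * K) _, ← integral_const_mul (u * K) _, ← integral_add
      ((integrable_mul_hermite_gauss m).const_mul (α * K))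
      ((integrable_hermite_gauss m).const_mul (u * K))]
    congr 1; funext x; ring
  rw [hsplit, gaussI, gaussJ]
  match m with
  | 0 =>
      have hπ : Real.sqrt Real.pi ≠ 0 := by positivity
      simp only [if_pos rfl, if_true, Nat.zero_ne_one, if_false, hK]
      simp only [pow_zero, Nat.factorial_zero, Nat.cast_one, mul_one]
      field_simp
      ring
  | 1 =>
      simp only [if_pos rfl, if_true, Nat.one_ne_zero, if_false, hK]
      have h2 : Real.sqrt (Real.pi * 2 ^ 1 * (Nat.factorial 1 : ℝ))
          = Real.sqrt Real.pi * Real.sqrt 2 := by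
        rw [show (Real.pi * 2 ^ 1 * (Nat.factorial 1 : ℝ)) = Real.pi * 2 by norm_num]
        exact Real.sqrt_mul Real.pi_pos.le 2
      have hπ : Real.sqrt Real.pi ≠ 0 := by positivity
      have h2' : Real.sqrt 2 ≠ 0 := by positivity
      rw [h2]
      field_simp
      ring
  | (k + 2) => simp

end CoV

/-- Physics-based update formula for the Hermite shift parameter. -/
theorem hermite_shift_update (N : ℕ) (hN : 1 ≤ N) (α u : ℝ) (hα : 0 < α)
    (c : ℕ → ℝ) (hc0 : c 0 ≠ 0) (f : ℝ → ℝ)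
    (hf : ∀ v : ℝ, f v = ∑ m ∈ Finset.range (N + 1), c m * awHermite α u m v) :
    (∫ v : ℝ, f v) = α * c 0 ∧ (∫ v : ℝ, f v) ≠ 0 ∧
    (∫ v : ℝ, v * f v) / (∫ v : ℝ, f v) = u + α / Real.sqrt 2 * (c 1 / c 0) := by
  have h0mem : (0 : ℕ) ∈ Finset.range (N + 1) := Finset.mem_range.mpr (Nat.succ_pos N)
  have hI : (∫ v : ℝ, f v) = α * c 0 := by
    have h1 : (∫ v : ℝ, f v)
        = ∑ m ∈ Finset.range (N + 1), ∫ v : ℝ, c m * awHermite α u m v := by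
      rw [show (fun v : ℝ => f v) = fun v : ℝ =>
          ∑ m ∈ Finset.range (N + 1), c m * awHermite α u m v from funext hf]
      exact integral_finset_sum _ fun m _ => (integrable_awHermite hα m).const_mul _
    rw [h1]
    have h2 : ∀ m ∈ Finset.range (N + 1),
        (∫ v : ℝ, c m * awHermite α u m v) = c m * (if m = 0 then α else 0) := by
      intro m _
      rw [integral_const_mul _ _, psi_int hα]
    rw [Finset.sum_congr rfl h2, Finset.sum_eq_single_of_mem 0 h0mem
      (fun b _ hb => by simp [hb])]
    simp [mul_comm]
  have hne : (∫ v : ℝ, f v) ≠ 0 := by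
    rw [hI]; exact mul_ne_zero (ne_of_gt hα) hc0
  refine ⟨hI, hne, ?_⟩
  have hJ : (∫ v : ℝ, v * f v) = α * c 0 * u + α ^ 2 * (Real.sqrt 2)⁻¹ * c 1 := by
    have h1 : (∫ v : ℝ, v * f v)
        = ∑ m ∈ Finset.range (N + 1), ∫ v : ℝ, c m * (v * awHermite α u m v) := by
      rw [show (fun v : ℝ => v * f v) = fun v : ℝ =>
          ∑ m ∈ Finset.range (N + 1), c m * (v * awHermite α u m v) from ?_]
      · exact integral_finset_sum _ fun m _ =>
          (integrable_mul_awHermite hα m).const_mul _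
      · funext v
        rw [hf v, Finset.mul_sum]
        congr 1; funext m; ring
    rw [h1]
    have h2 : ∀ m ∈ Finset.range (N + 1),
        (∫ v : ℝ, c m * (v * awHermite α u m v))
          = c m * (if m = 0 then α * u else if m = 1 then α ^ 2 * (Real.sqrt 2)⁻¹ else 0) := by
      intro m _
      rw [integral_const_mul _ _, vpsi_int hα]
    rw [Finset.sum_congr rfl h2]
    have hsub : ({0, 1} : Finset ℕ) ⊆ Finset.range (N + 1) := by
      intro x hx
      simp only [Finset.mem_insert, Finset.mem_singleton] at hx
      rcases hx with h | h <;> subst h <;> simp [Finset.mem_range] <;> omega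
    rw [← Finset.sum_subset hsub (fun x _ hx => by
      have hx0 : x ≠ 0 := fun h => hx (by simp [h])
      have hx1 : x ≠ 1 := fun h => hx (by simp [h])
      simp [hx0, hx1])]
    rw [Finset.sum_pair (by norm_num : (0 : ℕ) ≠ 1)]
    norm_num
    ring
  rw [hJ, hI]
  have hs2 : Real.sqrt 2 ≠ 0 := by positivity
  have hαne : α ≠ 0 := ne_of_gt hα
  field_simp
end
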